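/- arXiv:1707.09956 — 2 statements merged into one kernel-verified Lean document; each statement's English description precedes it below -/
import Mathlib

section
/- There is an absolute constant C > 0 such that for every integer n ≥ 1 and every interval I ⊆ [0, 1/2], one has | ∫_I sin(2π(2n−1)x)/sin(2πx) dx | ≤ C. -/
open Real
open Finset

lemma absz (θ : ℝ) :
    ‖Complex.exp (θ * Complex.I) - 1‖ = 2 * |Real.sin (θ/2)| := by
  set a : ℂ := ((θ/2 : ℝ) : ℂ) * Complex.I with ha
  have e1 : Complex.exp a * Complex.exp a = Complex.exp (θ * Complex.I) := by
    rw [← Complex.exp_add]; push_cast [ha]; ring_nf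
  have e2 : Complex.exp a * Complex.exp (-a) = 1 := by
    rw [← Complex.exp_add]; simp
  have h1 : Complex.exp (θ * Complex.I) - 1
      = Complex.exp a * (2 * Complex.sin ((θ/2 : ℝ) : ℂ) * Complex.I) := by
    rw [Complex.sin, neg_mul, ← ha]
    have h2 : ((2 : ℂ) * ((Complex.exp (-a) - Complex.exp a) * Complex.I / 2) * Complex.I)
        = Complex.exp a - Complex.exp (-a) := by
      ring_nf; rw [Complex.I_sq]; ring
    rw [h2, mul_sub, e1, e2]
  have h3 : Complex.sin ((θ/2 : ℝ) : ℂ) = ((Real.sin (θ/2) : ℝ) : ℂ) :=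
    (Complex.ofReal_sin _).symm
  rw [h1, norm_mul, norm_mul, norm_mul, Complex.norm_exp_ofReal_mul_I, h3, Complex.norm_real]
  simp

lemma sumA (θ : ℝ) (hs : 0 < Real.sin (θ/2)) (n : ℕ) :
    |∑ k ∈ range n, Real.sin (k * θ)| ≤ 1 / Real.sin (θ/2) := by
  set z : ℂ := Complex.exp (θ * Complex.I) with hz
  have habs : ‖z - 1‖ = 2 * Real.sin (θ/2) := by
    rw [hz, absz θ, abs_of_pos hs]
  have hz1 : z ≠ 1 := by
    intro h
    rw [h] at habs
    simp at habs
    linarith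
  have hsum : (∑ k ∈ range n, Real.sin (k * θ)) = (∑ k ∈ range n, z ^ k).im := by
    rw [Complex.im_sum]
    refine Finset.sum_congr rfl fun k _ => ?_
    rw [hz, ← Complex.exp_nat_mul]
    rw [show (k : ℂ) * ((θ:ℂ) * Complex.I) = (((k : ℝ) * θ : ℝ) : ℂ) * Complex.I by push_cast; ring]
    rw [Complex.exp_ofReal_mul_I_im]
  rw [hsum]
  have h2 : ‖∑ k ∈ range n, z ^ k‖ ≤ 1 / Real.sin (θ/2) := by
    rw [geom_sum_eq hz1]
    rw [norm_div, habs]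
    have hnum : ‖z ^ n - 1‖ ≤ 2 := by
      calc ‖z ^ n - 1‖ ≤ ‖z ^ n‖ + ‖(1 : ℂ)‖ := norm_sub_le _ _
        _ ≤ 2 := by
            rw [norm_pow, hz, Complex.norm_exp_ofReal_mul_I]
            norm_num
    calc ‖z ^ n - 1‖ / (2 * Real.sin (θ/2)) ≤ 2 / (2 * Real.sin (θ/2)) := by
          gcongr
        _ = 1 / Real.sin (θ/2) := by field_simp
  exact le_trans (Complex.abs_im_le_norm _) h2

lemma tailBound (θ : ℝ) (hs : 0 < Real.sin (θ/2)) (m n : ℕ) (hm : 1 ≤ m) :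
    |∑ k ∈ Ico m n, Real.sin (k * θ) / k| ≤ 3 / (Real.sin (θ/2) * m) := by
  have hmR : (0:ℝ) < m := by exact_mod_cast hm
  rcases le_or_gt n m with h | hmn
  · rw [Finset.Ico_eq_empty (by omega)]
    simp only [Finset.sum_empty, abs_zero]
    positivity
  set B := 1 / Real.sin (θ/2) with hB
  have hB0 : 0 < B := by positivity
  have hG : ∀ j : ℕ, |∑ i ∈ range j, Real.sin (i * θ)| ≤ B := fun j => sumA θ hs j
  have key := Finset.sum_Ico_by_parts (fun i : ℕ => ((i:ℝ))⁻¹)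
    (fun i : ℕ => Real.sin (i * θ)) hmn
  simp only [smul_eq_mul] at key
  have heq : ∑ k ∈ Ico m n, Real.sin (k * θ) / k
      = ∑ i ∈ Ico m n, ((i:ℝ))⁻¹ * Real.sin (i * θ) := by
    refine Finset.sum_congr rfl fun k _ => ?_
    rw [div_eq_inv_mul]
  rw [heq, key]
  have hn1 : m ≤ n - 1 := by omega
  have hn1R : (m:ℝ) ≤ ((n-1 : ℕ):ℝ) := by exact_mod_cast hn1
  have hmn1R : (0:ℝ) < ((n-1:ℕ):ℝ) := lt_of_lt_of_le hmR hn1R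
  -- bound the three pieces
  have t1 : |((n-1:ℕ):ℝ)⁻¹ * ∑ i ∈ range n, Real.sin (i * θ)| ≤ B / m := by
    rw [abs_mul]
    calc |((n-1:ℕ):ℝ)⁻¹| * |∑ i ∈ range n, Real.sin (i * θ)|
        ≤ (m:ℝ)⁻¹ * B := by
          apply mul_le_mul _ (hG n) (abs_nonneg _) (by positivity)
          rw [abs_of_pos (by positivity)]
          exact inv_anti₀ hmR hn1R
      _ = B / m := by rw [div_eq_inv_mul, mul_comm]
  have t2 : |(m:ℝ)⁻¹ * ∑ i ∈ range m, Real.sin (i * θ)| ≤ B / m := by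
    rw [abs_mul, abs_of_pos (by positivity : (0:ℝ) < (m:ℝ)⁻¹)]
    calc (m:ℝ)⁻¹ * |∑ i ∈ range m, Real.sin (i * θ)| ≤ (m:ℝ)⁻¹ * B := by
          exact mul_le_mul_of_nonneg_left (hG m) (by positivity)
      _ = B / m := by rw [div_eq_inv_mul, mul_comm]
  have t3 : |∑ i ∈ Ico m (n-1), ((((i:ℕ)+1:ℕ):ℝ)⁻¹ - ((i:ℕ):ℝ)⁻¹) *
        ∑ j ∈ range (i+1), Real.sin (j * θ)| ≤ B / m := by
    calc |∑ i ∈ Ico m (n-1), ((((i:ℕ)+1:ℕ):ℝ)⁻¹ - ((i:ℕ):ℝ)⁻¹) *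
          ∑ j ∈ range (i+1), Real.sin (j * θ)|
        ≤ ∑ i ∈ Ico m (n-1), |((((i:ℕ)+1:ℕ):ℝ)⁻¹ - ((i:ℕ):ℝ)⁻¹) *
          ∑ j ∈ range (i+1), Real.sin (j * θ)| := Finset.abs_sum_le_sum_abs _ _
      _ ≤ ∑ i ∈ Ico m (n-1), (((i:ℕ):ℝ)⁻¹ - (((i:ℕ)+1:ℕ):ℝ)⁻¹) * B := by
          refine Finset.sum_le_sum fun i hi => ?_
          have hi1 : 1 ≤ i := le_trans hm (Finset.mem_Ico.mp hi).1
          have hiR : (0:ℝ) < i := by exact_mod_cast hi1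
          rw [abs_mul]
          have h1 : |(((i:ℕ)+1:ℕ):ℝ)⁻¹ - ((i:ℕ):ℝ)⁻¹| = ((i:ℕ):ℝ)⁻¹ - (((i:ℕ)+1:ℕ):ℝ)⁻¹ := by
            rw [abs_sub_comm, abs_of_nonneg]
            apply sub_nonneg.mpr
            apply inv_anti₀ hiR
            push_cast; linarith
          rw [h1]
          apply mul_le_mul_of_nonneg_left (hG _)
          rw [sub_nonneg]
          apply inv_anti₀ hiR
          push_cast; linarith
      _ = (((m:ℕ):ℝ)⁻¹ - (((n-1:ℕ):ℕ):ℝ)⁻¹) * B := by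
          rw [← Finset.sum_mul]
          congr 1
          rw [Finset.sum_Ico_eq_sub _ hn1,
            Finset.sum_range_sub' (fun i : ℕ => ((i:ℕ):ℝ)⁻¹),
            Finset.sum_range_sub' (fun i : ℕ => ((i:ℕ):ℝ)⁻¹)]
          ring
      _ ≤ B / m := by
          rw [div_eq_inv_mul]
          apply mul_le_mul_of_nonneg_right _ hB0.le
          have : (0:ℝ) ≤ (((n-1:ℕ)):ℝ)⁻¹ := by positivity
          linarith
  have habc : ∀ x y z : ℝ, |x| ≤ B/m → |y| ≤ B/m → |z| ≤ B/m →
      |x - y - z| ≤ 3 / (Real.sin (θ/2) * m) := by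
    intro x y z h1 h2 h3
    have e : x - y - z = x + (-y) + (-z) := by ring
    have h4 : |x + (-y) + (-z)| ≤ |x| + |-y| + |-z| := abs_add_three _ _ _
    rw [abs_neg, abs_neg] at h4
    have e2 : 3 / (Real.sin (θ/2) * m) = B/m + B/m + B/m := by
      rw [hB]; field_simp; ring
    rw [e, e2]
    linarith
  exact habc _ _ _ t1 t2 t3

lemma fullBound (θ : ℝ) (h0 : 0 < θ) (hπ : θ ≤ π) (n : ℕ) :
    |∑ k ∈ Ico 1 n, Real.sin (k * θ) / k| ≤ 1 + 3 * π := by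
  have hπ0 := Real.pi_pos
  have hs : 0 < Real.sin (θ/2) :=
    Real.sin_pos_of_pos_of_lt_pi (by linarith) (by linarith)
  have hlb : θ/π ≤ Real.sin (θ/2) := by
    have h := Real.mul_le_sin (x := θ/2) (by linarith) (by linarith)
    have e : 2/π*(θ/2) = θ/π := by field_simp
    linarith [e ▸ h]
  set m := Nat.ceil (1/θ) with hmdef
  have hm1 : 1 ≤ m := Nat.one_le_ceil_iff.mpr (by positivity)
  have hmθ : 1/θ ≤ (m:ℝ) := Nat.le_ceil _
  have hmθ2 : (m:ℝ) < 1/θ + 1 := Nat.ceil_lt_add_one (by positivity)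
  have head : ∀ j : ℕ, j ≤ m → |∑ k ∈ Ico 1 j, Real.sin (k * θ) / k| ≤ 1 := by
    intro j hj
    calc |∑ k ∈ Ico 1 j, Real.sin (k * θ) / k|
        ≤ ∑ k ∈ Ico 1 j, |Real.sin (k * θ) / k| := Finset.abs_sum_le_sum_abs _ _
      _ ≤ ∑ _k ∈ Ico 1 j, θ := by
          refine Finset.sum_le_sum fun k hk => ?_
          have hk1 : 1 ≤ k := (Finset.mem_Ico.mp hk).1
          have hkR : (0:ℝ) < k := by exact_mod_cast hk1
          rw [abs_div, abs_of_pos hkR, div_le_iff₀ hkR]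
          calc |Real.sin (k * θ)| ≤ |(k:ℝ) * θ| := Real.abs_sin_le_abs
            _ = θ * k := by rw [abs_of_nonneg (by positivity)]; ring
      _ = ((j - 1 : ℕ):ℝ) * θ := by
          rw [Finset.sum_const, Nat.card_Ico, nsmul_eq_mul]
      _ ≤ 1 := by
          have h5 : ((j-1:ℕ):ℝ) ≤ ((m-1:ℕ):ℝ) := by exact_mod_cast Nat.sub_le_sub_right hj 1
          have h6 : ((m-1:ℕ):ℝ) = (m:ℝ) - 1 := by
            rw [Nat.cast_sub hm1]; norm_num
          have h7 : ((j-1:ℕ):ℝ) * θ ≤ ((m:ℝ) - 1) * θ := by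
            apply mul_le_mul_of_nonneg_right _ h0.le
            rw [← h6]; exact h5
          have h8 : ((m:ℝ) - 1) * θ ≤ (1/θ) * θ := by
            apply mul_le_mul_of_nonneg_right _ h0.le
            linarith
          have h9 : (1/θ) * θ = 1 := by field_simp
          linarith
  rcases le_or_gt n m with h | hmn
  · exact le_trans (head n h) (by linarith)
  · have hsplit : ∑ k ∈ Ico 1 m, Real.sin (k * θ) / k + ∑ k ∈ Ico m n, Real.sin (k * θ) / k
        = ∑ k ∈ Ico 1 n, Real.sin (k * θ) / k :=
      Finset.sum_Ico_consecutive _ hm1 hmn.le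
    rw [← hsplit]
    have t := tailBound θ hs m n hm1
    have ht : 3 / (Real.sin (θ/2) * m) ≤ 3 * π := by
      have hge : 1/π ≤ Real.sin (θ/2) * m := by
        calc 1/π = (θ/π) * (1/θ) := by field_simp
          _ ≤ Real.sin (θ/2) * m := by
              apply mul_le_mul hlb hmθ (by positivity) hs.le
      calc 3 / (Real.sin (θ/2) * m) ≤ 3 / (1/π) := by
            apply div_le_div_of_nonneg_left (by norm_num) (by positivity) hge
        _ = 3 * π := by field_simp
    calc |∑ k ∈ Ico 1 m, Real.sin (k * θ) / k + ∑ k ∈ Ico m n, Real.sin (k * θ) / k|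
        ≤ |∑ k ∈ Ico 1 m, Real.sin (k * θ) / k| + |∑ k ∈ Ico m n, Real.sin (k * θ) / k| :=
          abs_add_le _ _
      _ ≤ 1 + 3 * π := add_le_add (head m le_rfl) (le_trans t ht)

lemma fullBound2 (θ : ℝ) (h0 : 0 ≤ θ) (h2π : θ ≤ 2*π) (n : ℕ) :
    |∑ k ∈ Ico 1 n, Real.sin (k * θ) / k| ≤ 1 + 3 * π := by
  have hπ0 := Real.pi_pos
  rcases eq_or_lt_of_le h0 with h | h
  · simp [← h, Real.sin_zero]
    positivity
  rcases le_or_gt θ π with h1 | h1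
  · exact fullBound θ h h1 n
  · set θ' := 2*π - θ with hθ'
    have hθ'0 : 0 ≤ θ' := by simp [hθ']; linarith
    have hθ'π : θ' < π := by simp [hθ']; linarith
    have hsin : ∀ k : ℕ, Real.sin (k * θ) = -Real.sin (k * θ') := by
      intro k
      have e : (k:ℝ) * θ = -((k:ℝ) * θ') + (k:ℤ) * (2*π) := by
        push_cast; rw [hθ']; ring
      rw [e, Real.sin_add_int_mul_two_pi, Real.sin_neg]
    have heq : ∑ k ∈ Ico 1 n, Real.sin (k * θ) / k
        = -∑ k ∈ Ico 1 n, Real.sin (k * θ') / k := by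
      rw [← Finset.sum_neg_distrib]
      exact Finset.sum_congr rfl fun k _ => by rw [hsin k]; ring
    rw [heq, abs_neg]
    rcases eq_or_lt_of_le hθ'0 with h2 | h2
    · simp [← h2, Real.sin_zero]
      positivity
    · exact fullBound θ' h2 hθ'π.le n

lemma kernelId (n : ℕ) (hn : 1 ≤ n) (u : ℝ) :
    Real.sin ((2*(n:ℝ) - 1) * u)
      = Real.sin u * (1 + 2 * ∑ k ∈ range (n-1), Real.cos ((2*(k:ℝ)+2) * u)) := by
  have term : ∀ k : ℕ, Real.sin ((2*(((k:ℕ)+1:ℕ):ℝ)+1) * u) - Real.sin ((2*(k:ℝ)+1) * u)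
      = 2 * Real.sin u * Real.cos ((2*(k:ℝ)+2) * u) := by
    intro k
    push_cast
    have e1 : (2*((k:ℝ)+1)+1) * u = (2*(k:ℝ)+2)*u + u := by ring
    have e2 : (2*(k:ℝ)+1) * u = (2*(k:ℝ)+2)*u - u := by ring
    rw [e1, e2, Real.sin_add, Real.sin_sub]; ring
  have tele := Finset.sum_range_sub (f := fun k : ℕ => Real.sin ((2*(k:ℝ)+1) * u)) (n-1)
  simp only [term] at tele
  have hc : ((n-1:ℕ):ℝ) = (n:ℝ) - 1 := by
    rw [Nat.cast_sub hn]; norm_num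
  rw [hc] at tele
  have e3 : (2*((n:ℝ)-1)+1) * u = (2*(n:ℝ) - 1) * u := by ring
  rw [e3] at tele
  have e4 : (2*((0:ℕ):ℝ)+1) * u = u := by norm_num
  rw [e4] at tele
  have : ∑ x ∈ range (n - 1), 2 * Real.sin u * Real.cos ((2 * (x:ℝ) + 2) * u)
      = Real.sin u * (2 * ∑ k ∈ range (n-1), Real.cos ((2*(k:ℝ)+2) * u)) := by
    rw [Finset.mul_sum, Finset.mul_sum]
    exact Finset.sum_congr rfl fun k _ => by ring
  rw [this] at tele
  linarith [tele]

/-- **Uniform bound on partial integrals of the Dirichlet-type kernel.**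
There is an absolute constant `C > 0` such that for every integer `n ≥ 1` and every interval
`I = [a,b] ⊆ [0, 1/2]`, one has `|∫_I sin(2π(2n−1)x)/sin(2πx) dx| ≤ C`. -/
theorem dirichlet_kernel_integral_bound :
    ∃ C : ℝ, 0 < C ∧ ∀ (n : ℕ), 1 ≤ n → ∀ a b : ℝ,
      0 ≤ a → a ≤ b → b ≤ 1 / 2 →
      |∫ x in a..b, Real.sin (2 * π * (2 * (n : ℝ) - 1) * x) / Real.sin (2 * π * x)| ≤ C := by
  have hπ0 := Real.pi_pos
  refine ⟨1/2 + (1 + 3*π)/π, by positivity, fun n hn a b ha hab hb => ?_⟩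
  set c : ℕ → ℝ := fun k => (2*(k:ℝ)+2)*(2*π) with hc
  have hck : ∀ k, c k ≠ 0 := fun k => by positivity
  -- Step 1: replace integrand a.e.
  have hae : (∫ x in a..b, Real.sin (2 * π * (2 * (n : ℝ) - 1) * x) / Real.sin (2 * π * x))
      = ∫ x in a..b, (1 + 2 * ∑ k ∈ range (n-1), Real.cos (c k * x)) := by
    apply intervalIntegral.integral_congr_ae
    have hS : (MeasureTheory.volume {x : ℝ | Real.sin (2*π*x) = 0}) = 0 := by
      apply Set.Countable.measure_zero
      apply Set.Countable.mono _ (Set.countable_range (fun k : ℤ => (k:ℝ)/2))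
      intro x hx
      obtain ⟨k, hk⟩ := Real.sin_eq_zero_iff.mp hx
      have hk2 : (k:ℝ) = 2*x := by
        apply mul_right_cancel₀ Real.pi_ne_zero
        rw [hk]; ring
      exact ⟨k, by show (k:ℝ)/2 = x; rw [hk2]; ring⟩
    filter_upwards [MeasureTheory.measure_eq_zero_iff_ae_notMem.mp hS] with x hx _
    have hsx : Real.sin (2*π*x) ≠ 0 := hx
    have e1 : 2 * π * (2 * (n : ℝ) - 1) * x = (2*(n:ℝ) - 1) * (2*π*x) := by ring
    rw [e1, kernelId n hn (2*π*x), mul_div_cancel_left₀ _ hsx]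
    refine congrArg (1 + 2 * ·) (Finset.sum_congr rfl fun k _ => ?_)
    congr 1
    rw [hc]; ring
  rw [hae]
  -- Step 2: integrate
  have hcont : ∀ k : ℕ, Continuous fun x : ℝ => Real.cos (c k * x) := fun k =>
    Real.continuous_cos.comp (continuous_const.mul continuous_id)
  have hint : (∫ x in a..b, (1 + 2 * ∑ k ∈ range (n-1), Real.cos (c k * x)))
      = (b - a) + 2 * ∑ k ∈ range (n-1),
          (Real.sin (c k * b) - Real.sin (c k * a)) / c k := by
    rw [intervalIntegral.integral_add intervalIntegrable_const]
    · rw [intervalIntegral.integral_const, smul_eq_mul, mul_one]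
      congr 1
      rw [intervalIntegral.integral_const_mul, intervalIntegral.integral_finset_sum]
      · congr 1
        refine Finset.sum_congr rfl fun k _ => ?_
        rw [intervalIntegral.integral_comp_mul_left Real.cos (hck k), integral_cos,
          smul_eq_mul, div_eq_inv_mul]
      · exact fun k _ => ((hcont k).intervalIntegrable a b)
    · apply Continuous.intervalIntegrable
      exact continuous_const.mul (continuous_finset_sum _ fun k _ => hcont k)
  rw [hint]
  -- Step 3: rewrite as difference of sin sums
  set Sb := ∑ k ∈ Ico 1 n, Real.sin (k * (4*π*b)) / k with hSb
  set Sa := ∑ k ∈ Ico 1 n, Real.sin (k * (4*π*a)) / k with hSa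
  have hrw : 2 * ∑ k ∈ range (n-1), (Real.sin (c k * b) - Real.sin (c k * a)) / c k
      = (1/(2*π)) * (Sb - Sa) := by
    rw [hSb, hSa, Finset.sum_Ico_eq_sum_range, Finset.sum_Ico_eq_sum_range,
      ← Finset.sum_sub_distrib, Finset.mul_sum, Finset.mul_sum]
    refine Finset.sum_congr rfl fun k _ => ?_
    have hk1 : ((1 + k : ℕ) : ℝ) = (k:ℝ) + 1 := by push_cast; ring
    rw [hk1]
    have hkpos : (0:ℝ) < (k:ℝ) + 1 := by positivity
    have e1 : c k * b = ((k:ℝ)+1) * (4*π*b) := by rw [hc]; ring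
    have e2 : c k * a = ((k:ℝ)+1) * (4*π*a) := by rw [hc]; ring
    rw [e1, e2, hc]
    field_simp
  rw [hrw]
  -- Step 4: bound
  have hb0 : 0 ≤ b := le_trans ha hab
  have hbb : |Sb| ≤ 1 + 3*π := by
    rw [hSb]
    exact fullBound2 _ (mul_nonneg (by positivity) hb0) (by nlinarith) n
  have hba : |Sa| ≤ 1 + 3*π := by
    rw [hSa]
    exact fullBound2 _ (mul_nonneg (by positivity) ha) (by nlinarith) n
  have h1 : |b - a| ≤ 1/2 := by rw [abs_of_nonneg (by linarith)]; linarith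
  have h2 : |(1/(2*π)) * (Sb - Sa)| ≤ (1 + 3*π)/π := by
    rw [abs_mul, abs_of_pos (by positivity : (0:ℝ) < 1/(2*π))]
    calc (1/(2*π)) * |Sb - Sa| ≤ (1/(2*π)) * (2*(1+3*π)) := by
          apply mul_le_mul_of_nonneg_left _ (by positivity)
          calc |Sb - Sa| ≤ |Sb| + |Sa| := abs_sub _ _
            _ ≤ 2*(1+3*π) := by linarith
      _ = (1 + 3*π)/π := by field_simp
  calc |(b - a) + (1/(2*π)) * (Sb - Sa)| ≤ |b - a| + |(1/(2*π)) * (Sb - Sa)| := abs_add_le _ _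
    _ ≤ 1/2 + (1 + 3*π)/π := add_le_add h1 h2
end

section
/- Define K_{SO(2n)}(x,y) := s_{2n−1}(x−y) + s_{2n−1}(x+y), where s_m(t) := sin(πmt)/sin(πt) (extended by continuity, with s_m(0) = m). There is an absolute constant C > 0 such that for every integer n ≥ 1 and every interval I ⊆ [0, 1/2]: ∫_{[0,1/2]∖I} ∫_I K_{SO(2n)}(x,y)² dx dy ≤ C·log(2 + 2n·|I|). -/
open Real MeasureTheory

/-- `sKer m t = sin (π m t) / sin (π t)`, extended by continuity where `sin (π t) = 0`
(at an integer `t = k` the continuous extension has value `m·cos(πmk)/cos(πk)`, which equals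
`m·cos(πmt)·cos(πt)` there; in particular `sKer m 0 = m`). -/
noncomputable def sKer (m : ℕ) (t : ℝ) : ℝ :=
  if Real.sin (π * t) = 0 then (m : ℝ) * Real.cos (π * m * t) * Real.cos (π * t)
  else Real.sin (π * m * t) / Real.sin (π * t)

/-- The determinantal kernel of the nontrivial eigenangles of a Haar-random matrix in `SO(2n)`:
`K_{SO(2n)}(x,y) = s_{2n−1}(x−y) + s_{2n−1}(x+y)`. -/
noncomputable def KSOEven (n : ℕ) (x y : ℝ) : ℝ :=
  sKer (2 * n - 1) (x - y) + sKer (2 * n - 1) (x + y)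

/- ### Auxiliary pointwise estimates -/

lemma abs_sin_nat_mul_le (m : ℕ) (θ : ℝ) : |Real.sin (m * θ)| ≤ m * |Real.sin θ| := by
  induction m with
  | zero => simp
  | succ k ih =>
    have h : ((k+1 : ℕ) : ℝ) * θ = k * θ + θ := by push_cast; ring
    rw [h, Real.sin_add]
    have h1 : |Real.sin (k*θ) * Real.cos θ| ≤ k * |Real.sin θ| := by
      rw [abs_mul]
      calc |Real.sin (k*θ)| * |Real.cos θ| ≤ (k * |Real.sin θ|) * 1 :=
        mul_le_mul ih (Real.abs_cos_le_one _) (abs_nonneg _) (by positivity)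
      _ = k * |Real.sin θ| := by ring
    have h2 : |Real.cos (k*θ) * Real.sin θ| ≤ |Real.sin θ| := by
      rw [abs_mul]
      calc |Real.cos (k*θ)| * |Real.sin θ| ≤ 1 * |Real.sin θ| :=
        mul_le_mul_of_nonneg_right (Real.abs_cos_le_one _) (abs_nonneg _)
      _ = |Real.sin θ| := one_mul _
    calc |Real.sin (k*θ) * Real.cos θ + Real.cos (k*θ) * Real.sin θ|
        ≤ |Real.sin (k*θ) * Real.cos θ| + |Real.cos (k*θ) * Real.sin θ| := abs_add_le _ _
      _ ≤ k * |Real.sin θ| + |Real.sin θ| := add_le_add h1 h2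
      _ = (k+1 : ℕ) * |Real.sin θ| := by push_cast; ring

lemma pi_m_t (m : ℕ) (t : ℝ) : π * m * t = (m:ℝ) * (π * t) := by ring

lemma abs_sKer_le (m : ℕ) (t : ℝ) : |sKer m t| ≤ m := by
  unfold sKer
  split_ifs with h
  · calc |(m:ℝ) * Real.cos (π*m*t) * Real.cos (π*t)|
        = (m:ℝ) * |Real.cos (π*m*t)| * |Real.cos (π*t)| := by
          rw [abs_mul, abs_mul, Nat.abs_cast]
      _ ≤ (m:ℝ) * 1 * 1 := by
          have h1 := Real.abs_cos_le_one (π*m*t)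
          have h2 := Real.abs_cos_le_one (π*t)
          have hm : (0:ℝ) ≤ m := Nat.cast_nonneg m
          nlinarith [abs_nonneg (Real.cos (π*m*t)), abs_nonneg (Real.cos (π*t)),
            mul_nonneg hm (abs_nonneg (Real.cos (π*m*t)))]
      _ = m := by ring
  · rw [abs_div, div_le_iff₀ (abs_pos.mpr h), pi_m_t]
    exact abs_sin_nat_mul_le m (π*t)

lemma sKer_sq_le (m : ℕ) (t d : ℝ) (hd : 0 ≤ d) (h2d : 2*d ≤ |Real.sin (π*t)|) :
    sKer m t ^ 2 ≤ 2*(m:ℝ)^2 / (1 + 4*(m:ℝ)^2*d^2) := by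
  have hm2 : sKer m t ^2 ≤ (m:ℝ)^2 := by
    have := abs_sKer_le m t
    nlinarith [abs_nonneg (sKer m t), sq_abs (sKer m t)]
  by_cases h : Real.sin (π * t) = 0
  · have hd0 : d = 0 := by rw [h] at h2d; simp at h2d; linarith
    rw [hd0]
    have h1 : (1:ℝ) + 4*(m:ℝ)^2*0^2 = 1 := by ring
    rw [h1, div_one]
    nlinarith [sq_nonneg ((m:ℝ))]
  · set S := Real.sin (π*t) with hSdef
    set N := Real.sin (π*m*t) with hNdef
    have hsk : sKer m t = N / S := by unfold sKer; rw [if_neg h]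
    have hS2 : 0 < S^2 := by positivity
    have hN1 : N^2 ≤ 1 := Real.sin_sq_le_one _
    have h4d : 4*d^2 ≤ S^2 := by
      have : (2*d)^2 ≤ |S|^2 := by
        apply sq_le_sq' _ h2d; linarith [abs_nonneg S]
      rw [sq_abs] at this; linarith
    have hNm : N^2 ≤ (m:ℝ)^2 * S^2 := by
      have h1 : |N| ≤ m * |S| := by
        rw [hNdef, pi_m_t]; exact abs_sin_nat_mul_le m (π*t)
      nlinarith [abs_nonneg N, sq_abs N, sq_abs S]
    rw [hsk, div_pow, div_le_div_iff₀ hS2 (by positivity)]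
    nlinarith [mul_nonneg (mul_nonneg (by positivity : (0:ℝ) ≤ 4*(m:ℝ)^2) hd) hd]

lemma jordan_abs (u : ℝ) (h : |u| ≤ 1/2) : 2*|u| ≤ |Real.sin (π*u)| := by
  have hpi : |π * u| ≤ π / 2 := by
    rw [abs_mul, abs_of_pos Real.pi_pos]
    calc π * |u| ≤ π * (1/2) := by
          exact mul_le_mul_of_nonneg_left h Real.pi_pos.le
      _ = π/2 := by ring
  have := Real.mul_abs_le_abs_sin hpi
  rw [abs_mul, abs_of_pos Real.pi_pos] at this
  calc 2*|u| = 2/π * (π * |u|) := by field_simp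
    _ ≤ |Real.sin (π*u)| := this

lemma my_arctan_le_self {x : ℝ} (hx : 0 ≤ x) : Real.arctan x ≤ x := by
  rcases eq_or_lt_of_le hx with h | h
  · simp [← h]
  · have h1 : 0 < Real.arctan x := by
      have := Real.arctan_strictMono h
      simpa using this
    have h2 : Real.arctan x < π/2 := Real.arctan_lt_pi_div_two x
    have := Real.lt_tan h1 h2
    rw [Real.tan_arctan] at this
    linarith

lemma arctan_mono {u v : ℝ} (h : u ≤ v) : Real.arctan u ≤ Real.arctan v :=
  Real.arctan_strictMono.monotone h

lemma arctan_diff_le {u v : ℝ} (hv : 0 ≤ v) (huv : v ≤ u) :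
    Real.arctan u - Real.arctan v ≤ (u - v) / (1 + v^2) := by
  rcases eq_or_lt_of_le huv with h | h
  · simp [h]
  · obtain ⟨c, hc, hslope⟩ := exists_hasDerivAt_eq_slope Real.arctan (fun x => 1/(1+x^2)) h
      (Real.continuous_arctan.continuousOn) (fun x _ => Real.hasDerivAt_arctan x)
    have hc1 : v < c := hc.1
    have hne : u - v ≠ 0 := sub_ne_zero.mpr (ne_of_gt h)
    have harct : Real.arctan u - Real.arctan v = (1/(1+c^2)) * (u - v) := by
      rw [hslope]; field_simp
    rw [harct]
    have hden : 1 + v^2 ≤ 1 + c^2 := by nlinarith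
    rw [div_eq_mul_one_div (u-v), mul_comm (u-v)]
    apply mul_le_mul_of_nonneg_right _ (by linarith)
    apply div_le_div_of_nonneg_left one_pos.le (by positivity) hden

/- ### Antiderivative computations -/

lemma cont_gfun (M c : ℝ) : Continuous (fun x : ℝ => 4*M^2/(1+4*M^2*(x-c)^2)) := by
  apply Continuous.div continuous_const (by continuity)
  intro x; positivity

lemma integral_gfun (M c p q : ℝ) :
    ∫ x in p..q, 4*M^2/(1+4*M^2*(x-c)^2)
      = 2*M*Real.arctan (2*M*(q-c)) - 2*M*Real.arctan (2*M*(p-c)) := by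
  have hderiv : ∀ x ∈ Set.uIcc p q,
      HasDerivAt (fun x => 2*M*Real.arctan (2*M*(x-c))) (4*M^2/(1+4*M^2*(x-c)^2)) x := by
    intro x _
    have hu : HasDerivAt (fun x : ℝ => 2*M*(x-c)) (2*M) x := by
      simpa using ((hasDerivAt_id x).sub_const c).const_mul (2*M)
    have h1 := (Real.hasDerivAt_arctan (2*M*(x-c))).comp x hu
    have h2 := h1.const_mul (2*M)
    refine h2.congr_deriv ?_
    field_simp
    ring
  rw [intervalIntegral.integral_eq_sub_of_hasDerivAt hderiv
    ((cont_gfun M c).intervalIntegrable p q)]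

lemma integral_arctan_lin (c l : ℝ) (hc : 0 < c) :
    ∫ s in (0:ℝ)..l, Real.arctan (c*s)
      = l * Real.arctan (c*l) - Real.log (1+c^2*l^2)/(2*c) := by
  have hderiv : ∀ x ∈ Set.uIcc (0:ℝ) l,
      HasDerivAt (fun s => s * Real.arctan (c*s) - Real.log (1+c^2*s^2)/(2*c))
        (Real.arctan (c*x)) x := by
    intro x _
    have hu : HasDerivAt (fun s : ℝ => c*s) c x := by
      simpa using (hasDerivAt_id x).const_mul c
    have ha : HasDerivAt (fun s : ℝ => Real.arctan (c*s)) (1/(1+(c*x)^2)*c) x :=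
      (Real.hasDerivAt_arctan (c*x)).comp x hu
    have hm : HasDerivAt (fun s : ℝ => s * Real.arctan (c*s))
        (1 * Real.arctan (c*x) + x * (1/(1+(c*x)^2)*c)) x :=
      (hasDerivAt_id x).mul ha
    have hv : HasDerivAt (fun s : ℝ => 1+c^2*s^2) (c^2*(2*x)) x := by
      have := ((hasDerivAt_pow 2 x).const_mul (c^2)).const_add 1
      simpa using this
    have hpos : (0:ℝ) < 1+c^2*x^2 := by positivity
    have hlog : HasDerivAt (fun s : ℝ => Real.log (1+c^2*s^2))
        ((1+c^2*x^2)⁻¹ * (c^2*(2*x))) x := by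
      have := (Real.hasDerivAt_log hpos.ne').comp x hv; exact this
    have h := hm.sub (hlog.div_const (2*c))
    refine h.congr_deriv ?_
    field_simp
    ring
  have hcont : Continuous (fun x : ℝ => Real.arctan (c*x)) :=
    Real.continuous_arctan.comp (continuous_const.mul continuous_id)
  rw [intervalIntegral.integral_eq_sub_of_hasDerivAt hderiv (hcont.intervalIntegrable 0 l)]
  simp [Real.log_one]

lemma integral_inv_sq (k l Q : ℝ) (hl : 0 < l) (hQ : l ≤ Q) :
    ∫ s in l..Q, k/s^2 = k/l - k/Q := by
  have hderiv : ∀ x ∈ Set.uIcc l Q, HasDerivAt (fun s => -(k/s)) (k/x^2) x := by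
    intro x hx
    rw [Set.uIcc_of_le hQ] at hx
    have hx0' : 0 < x := lt_of_lt_of_le hl hx.1
    have hx0 : x ≠ 0 := ne_of_gt hx0'
    have h1 : HasDerivAt (fun s : ℝ => k/s) (-(k/x^2)) x := by
      have h2 := (hasDerivAt_inv hx0).const_mul k
      have e1 : (fun s : ℝ => k * s⁻¹) = (fun s : ℝ => k / s) := by
        funext s; rw [div_eq_mul_inv]
      rw [e1] at h2
      refine h2.congr_deriv ?_
      field_simp
    exact h1.neg.congr_deriv (neg_neg _)
  have hcont : ContinuousOn (fun s : ℝ => k/s^2) (Set.uIcc l Q) := by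
    apply ContinuousOn.div continuousOn_const (by fun_prop)
    intro x hx
    rw [Set.uIcc_of_le hQ] at hx
    have h3 : 0 < x := lt_of_lt_of_le hl hx.1
    positivity
  rw [intervalIntegral.integral_eq_sub_of_hasDerivAt hderiv (hcont.intervalIntegrable)]
  ring

/- ### The key one-dimensional bracket estimate -/

lemma cont_arctan_comp (c d : ℝ) : Continuous (fun s : ℝ => Real.arctan (c*s+d)) :=
  Real.continuous_arctan.comp (by fun_prop)

lemma bracket_cont (M L : ℝ) :
    Continuous (fun s : ℝ => Real.arctan (2*M*(s+L)) - Real.arctan (2*M*s)) := by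
  have h0 : Continuous fun s : ℝ => Real.arctan (2*M*s+2*M*L) - Real.arctan (2*M*s+0) :=
    (cont_arctan_comp (2*M) (2*M*L)).sub (cont_arctan_comp (2*M) 0)
  exact h0.congr fun s => by
    rw [show 2*M*s+2*M*L = 2*M*(s+L) by ring, show 2*M*s+0 = 2*M*s by ring]

lemma bracket_integral_le (M L p q : ℝ) (hM : 1 ≤ M) (hL : 0 ≤ L) (hp : 0 ≤ p) (hpq : p ≤ q) :
    ∫ s in p..q, (Real.arctan (2*M*(s+L)) - Real.arctan (2*M*s))
      ≤ (1/M) * (1 + Real.log (1+2*M*L)) := by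
  have hM0 : 0 < M := lt_of_lt_of_le one_pos hM
  have hlog0 : 0 ≤ Real.log (1+2*M*L) := Real.log_nonneg (by nlinarith)
  rcases eq_or_lt_of_le hL with hL0 | hL0
  · rw [← hL0]
    rw [intervalIntegral.integral_congr (g := fun _ => (0:ℝ)) (by intro s _; simp)]
    simp only [intervalIntegral.integral_zero, mul_zero, add_zero, Real.log_one]
    positivity
  -- L > 0
  set f : ℝ → ℝ := fun s => Real.arctan (2*M*(s+L)) - Real.arctan (2*M*s) with hf
  have hfnn : ∀ s, 0 ≤ f s := by
    intro s
    have : Real.arctan (2*M*s) ≤ Real.arctan (2*M*(s+L)) := _root_.arctan_mono (by nlinarith)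
    simpa [hf] using this
  set Q : ℝ := max q L with hQ
  have hLQ : L ≤ Q := le_max_right _ _
  have hint : ∀ u v : ℝ, IntervalIntegrable f MeasureTheory.volume u v :=
    fun u v => (bracket_cont M L).intervalIntegrable u v
  have step1 : ∫ s in p..q, f s ≤ ∫ s in (0:ℝ)..Q, f s := by
    apply intervalIntegral.integral_mono_interval hp hpq (le_max_left _ _)
    · filter_upwards with s using hfnn s
    · exact hint 0 Q
  have step2 : ∫ s in (0:ℝ)..Q, f s = (∫ s in (0:ℝ)..L, f s) + ∫ s in L..Q, f s :=
    (intervalIntegral.integral_add_adjacent_intervals (hint 0 L) (hint L Q)).symm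
  have step3 : ∫ s in (0:ℝ)..L, f s ≤ ∫ s in (0:ℝ)..L, (π/2 - Real.arctan (2*M*s)) := by
    apply intervalIntegral.integral_mono_on hL
    · exact hint 0 L
    · exact (Continuous.intervalIntegrable (continuous_const.sub
        ((cont_arctan_comp (2*M) 0).congr (by intro s; rw [add_zero]))) 0 L)
    · intro s _
      have := Real.arctan_lt_pi_div_two (2*M*(s+L))
      simp only [hf]
      linarith
  have step4 : ∫ s in (0:ℝ)..L, (π/2 - Real.arctan (2*M*s))
      = π/2*L - (L * Real.arctan (2*M*L) - Real.log (1+(2*M)^2*L^2)/(2*(2*M))) := by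
    have harc : Continuous (fun s : ℝ => Real.arctan (2*M*s)) := by
      have := cont_arctan_comp (2*M) 0
      simpa using this
    rw [intervalIntegral.integral_sub (Continuous.intervalIntegrable continuous_const 0 L)
      (Continuous.intervalIntegrable harc 0 L)]
    rw [integral_arctan_lin (2*M) L (by positivity)]
    simp
    ring
  have step5 : π/2*L - (L * Real.arctan (2*M*L) - Real.log (1+(2*M)^2*L^2)/(2*(2*M)))
      ≤ 1/(2*M) + Real.log (1+2*M*L)/(2*M) := by
    have hML : 0 < 2*M*L := by positivity
    have e1 : π/2 - Real.arctan (2*M*L) = Real.arctan (2*M*L)⁻¹ :=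
      (Real.arctan_inv_of_pos hML).symm
    have e2 : Real.arctan (2*M*L)⁻¹ ≤ (2*M*L)⁻¹ := my_arctan_le_self (by positivity)
    have e3 : L * (π/2 - Real.arctan (2*M*L)) ≤ 1/(2*M) := by
      rw [e1]
      calc L * Real.arctan (2*M*L)⁻¹ ≤ L * (2*M*L)⁻¹ :=
            mul_le_mul_of_nonneg_left e2 hL
        _ = 1/(2*M) := by field_simp
    have e4 : Real.log (1+(2*M)^2*L^2) ≤ 2 * Real.log (1+2*M*L) := by
      have h1 : (1:ℝ)+(2*M)^2*L^2 ≤ (1+2*M*L)^2 := by nlinarith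
      calc Real.log (1+(2*M)^2*L^2) ≤ Real.log ((1+2*M*L)^2) :=
            Real.log_le_log (by positivity) h1
        _ = 2 * Real.log (1+2*M*L) := by
            rw [Real.log_pow]; push_cast; ring
    have h2M : (0:ℝ) < 2*(2*M) := by positivity
    calc π/2*L - (L * Real.arctan (2*M*L) - Real.log (1+(2*M)^2*L^2)/(2*(2*M)))
        = L * (π/2 - Real.arctan (2*M*L)) + Real.log (1+(2*M)^2*L^2)/(2*(2*M)) := by ring
      _ ≤ 1/(2*M) + (2*Real.log (1+2*M*L))/(2*(2*M)) := by
          apply add_le_add e3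
          apply div_le_div_of_nonneg_right e4 h2M.le
      _ = 1/(2*M) + Real.log (1+2*M*L)/(2*M) := by ring
  have step6 : ∫ s in L..Q, f s ≤ ∫ s in L..Q, (L/(2*M))/s^2 := by
    apply intervalIntegral.integral_mono_on hLQ (hint L Q)
    · apply ContinuousOn.intervalIntegrable
      rw [Set.uIcc_of_le hLQ]
      apply ContinuousOn.div continuousOn_const (by fun_prop)
      intro x hx
      have h3 : 0 < x := lt_of_lt_of_le hL0 hx.1
      positivity
    · intro s hs
      have hs0 : 0 < s := lt_of_lt_of_le hL0 hs.1
      have h1 : f s ≤ (2*M*(s+L) - 2*M*s) / (1 + (2*M*s)^2) :=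
        arctan_diff_le (by positivity) (by nlinarith)
      have h2 : (2*M*(s+L) - 2*M*s) / (1 + (2*M*s)^2) ≤ (L/(2*M))/s^2 := by
        have e5 : 2*M*(s+L) - 2*M*s = 2*M*L := by ring
        rw [e5]
        have e6 : (L/(2*M))/s^2 = (2*M*L)/(4*M^2*s^2) := by
          field_simp; ring
        rw [e6]
        have hb : (0:ℝ) < 4*M^2*s^2 := by
          apply mul_pos (by positivity) (pow_pos hs0 2)
        apply div_le_div_of_nonneg_left (by positivity) hb
        nlinarith [sq_nonneg (M*s)]
      linarith
  have step7 : ∫ s in L..Q, (L/(2*M))/s^2 ≤ 1/(2*M) := by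
    rw [integral_inv_sq (L/(2*M)) L Q hL0 hLQ]
    have h1 : (L/(2*M))/L = 1/(2*M) := by field_simp
    have h2 : 0 ≤ (L/(2*M))/Q := by
      have hQ0 : 0 < Q := lt_of_lt_of_le hL0 hLQ
      positivity
    linarith
  calc ∫ s in p..q, f s ≤ ∫ s in (0:ℝ)..Q, f s := step1
    _ = (∫ s in (0:ℝ)..L, f s) + ∫ s in L..Q, f s := step2
    _ ≤ (1/(2*M) + Real.log (1+2*M*L)/(2*M)) + 1/(2*M) := by
        have := le_trans step3 (le_of_eq step4)
        have h5 := le_trans this step5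
        have h6 := le_trans step6 step7
        linarith
    _ ≤ (1/M) * (1 + Real.log (1+2*M*L)) := by
        have key : (1/M) * (1 + Real.log (1+2*M*L))
            - ((1/(2*M) + Real.log (1+2*M*L)/(2*M)) + 1/(2*M))
            = Real.log (1+2*M*L)/(2*M) := by
          field_simp
          ring
        have hnn : 0 ≤ Real.log (1+2*M*L)/(2*M) := by positivity
        linarith

/- ### Substituted versions of the bracket estimate -/

lemma bracketB_sub (M L c1 c2 p q : ℝ) (hM : 1 ≤ M) (hL : 0 ≤ L) (hc : c2 = c1 + L)
    (hpq : p ≤ q) (hqc : q ≤ c1) :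
    ∫ y in p..q, (Real.arctan (2*M*(c2-y)) - Real.arctan (2*M*(c1-y)))
      ≤ (1/M) * (1 + Real.log (1+2*M*L)) := by
  have he : ∀ y ∈ Set.uIcc p q, Real.arctan (2*M*(c2-y)) - Real.arctan (2*M*(c1-y))
      = (fun s => Real.arctan (2*M*(s+L)) - Real.arctan (2*M*s)) (c1 - y) := by
    intro y _
    simp only
    rw [show 2*M*(c2-y) = 2*M*((c1-y)+L) by rw [hc]; ring]
  rw [intervalIntegral.integral_congr he]
  rw [intervalIntegral.integral_comp_sub_left
    (fun s => Real.arctan (2*M*(s+L)) - Real.arctan (2*M*s)) c1]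
  exact bracket_integral_le M L (c1-q) (c1-p) hM hL (by linarith) (by linarith)

lemma bracketB_sub' (M L c1 c2 p q : ℝ) (hM : 1 ≤ M) (hL : 0 ≤ L) (hc : c2 = c1 + L)
    (hpq : p ≤ q) (hcp : c2 ≤ p) :
    ∫ y in p..q, (Real.arctan (2*M*(c2-y)) - Real.arctan (2*M*(c1-y)))
      ≤ (1/M) * (1 + Real.log (1+2*M*L)) := by
  have he : ∀ y ∈ Set.uIcc p q, Real.arctan (2*M*(c2-y)) - Real.arctan (2*M*(c1-y))
      = (fun s => Real.arctan (2*M*(s+L)) - Real.arctan (2*M*s)) (y - c2) := by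
    intro y _
    simp only
    rw [show 2*M*(c2-y) = -(2*M*(y-c2)) by ring,
      show 2*M*(c1-y) = -(2*M*((y-c2)+L)) by rw [hc]; ring,
      Real.arctan_neg, Real.arctan_neg]
    ring
  rw [intervalIntegral.integral_congr he]
  rw [intervalIntegral.integral_comp_sub_right
    (fun s => Real.arctan (2*M*(s+L)) - Real.arctan (2*M*s)) c2]
  exact bracket_integral_le M L (p-c2) (q-c2) hM hL (by linarith) (by linarith)

lemma bracketB_add (M L c1 c2 p q : ℝ) (hM : 1 ≤ M) (hL : 0 ≤ L) (hc : c2 = c1 + L)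
    (hpq : p ≤ q) (hcp : 0 ≤ p + c1) :
    ∫ y in p..q, (Real.arctan (2*M*(c2+y)) - Real.arctan (2*M*(c1+y)))
      ≤ (1/M) * (1 + Real.log (1+2*M*L)) := by
  have he : ∀ y ∈ Set.uIcc p q, Real.arctan (2*M*(c2+y)) - Real.arctan (2*M*(c1+y))
      = (fun s => Real.arctan (2*M*(s+L)) - Real.arctan (2*M*s)) (y + c1) := by
    intro y _
    simp only
    rw [show 2*M*(c2+y) = 2*M*((y+c1)+L) by rw [hc]; ring,
      show 2*M*(c1+y) = 2*M*(y+c1) by ring]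
  rw [intervalIntegral.integral_congr he]
  rw [intervalIntegral.integral_comp_add_right
    (fun s => Real.arctan (2*M*(s+L)) - Real.arctan (2*M*s)) c1]
  exact bracket_integral_le M L (p+c1) (q+c1) hM hL (by linarith) (by linarith)

/- ### Pointwise bound on the kernel -/

lemma KSO_sq_ptwise (n : ℕ) (x y : ℝ) (hx0 : 0 ≤ x) (hx : x ≤ 1/2)
    (hy0 : 0 ≤ y) (hy : y ≤ 1/2) :
    KSOEven n x y ^ 2 ≤
      4*((2*n-1 : ℕ):ℝ)^2/(1+4*((2*n-1 : ℕ):ℝ)^2*(x-y)^2)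
      + 4*((2*n-1 : ℕ):ℝ)^2/(1+4*((2*n-1 : ℕ):ℝ)^2*(x-(-y))^2)
      + 4*((2*n-1 : ℕ):ℝ)^2/(1+4*((2*n-1 : ℕ):ℝ)^2*(x-(1-y))^2) := by
  set m : ℕ := 2*n-1 with hm
  set M : ℝ := ((m:ℕ):ℝ) with hMdef
  have h1 : sKer m (x-y) ^2 ≤ 2*M^2/(1+4*M^2*(x-y)^2) := by
    have habs : |x - y| ≤ 1/2 := abs_le.mpr ⟨by linarith, by linarith⟩
    have := sKer_sq_le m (x-y) |x-y| (abs_nonneg _) (jordan_abs (x-y) habs)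
    rwa [sq_abs] at this
  have h2 : sKer m (x+y) ^2 ≤ 2*M^2/(1+4*M^2*(x-(-y))^2) + 2*M^2/(1+4*M^2*(x-(1-y))^2) := by
    rcases le_or_gt (x+y) (1/2) with hle | hlt
    · have habs : |x + y| ≤ 1/2 := abs_le.mpr ⟨by linarith, by linarith⟩
      have hstep := sKer_sq_le m (x+y) (x+y) (by linarith)
        (by
          have := jordan_abs (x+y) habs
          rwa [abs_of_nonneg (by linarith : (0:ℝ) ≤ x+y)] at this)
      have he : (x+y)^2 = (x-(-y))^2 := by ring
      rw [he] at hstep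
      have hpos : (0:ℝ) ≤ 2*M^2/(1+4*M^2*(x-(1-y))^2) := by positivity
      linarith
    · have hd0 : (0:ℝ) ≤ 1-x-y := by linarith
      have habs : |1-x-y| ≤ 1/2 := abs_le.mpr ⟨by linarith, by linarith⟩
      have hsin : 2*(1-x-y) ≤ |Real.sin (π*(x+y))| := by
        have hj := jordan_abs (1-x-y) habs
        rw [abs_of_nonneg hd0] at hj
        have he1 : π*(1-x-y) = π - π*(x+y) := by ring
        rw [he1, Real.sin_pi_sub] at hj
        exact hj
      have hstep := sKer_sq_le m (x+y) (1-x-y) hd0 hsin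
      have he : (1-x-y)^2 = (x-(1-y))^2 := by ring
      rw [he] at hstep
      have hpos : (0:ℝ) ≤ 2*M^2/(1+4*M^2*(x-(-y))^2) := by positivity
      linarith
  have hK : KSOEven n x y ^2 ≤ 2 * sKer m (x-y)^2 + 2 * sKer m (x+y)^2 := by
    unfold KSOEven
    rw [← hm]
    nlinarith [sq_nonneg (sKer m (x-y) - sKer m (x+y))]
  have e1 : 4*M^2/(1+4*M^2*(x-y)^2) = 2*(2*M^2/(1+4*M^2*(x-y)^2)) := by ring
  have e2 : 4*M^2/(1+4*M^2*(x-(-y))^2) = 2*(2*M^2/(1+4*M^2*(x-(-y))^2)) := by ring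
  have e3 : 4*M^2/(1+4*M^2*(x-(1-y))^2) = 2*(2*M^2/(1+4*M^2*(x-(1-y))^2)) := by ring
  rw [← hMdef] at *
  rw [e1, e2, e3]
  linarith

/- ### Measurability facts -/

lemma sKer_measurable (m : ℕ) : Measurable (sKer m) := by
  unfold sKer
  apply Measurable.ite
  · exact (Real.continuous_sin.comp (continuous_const.mul continuous_id)).measurable
      (measurableSet_singleton 0)
  · fun_prop
  · apply Measurable.div <;> fun_prop

lemma KSO_measurable (n : ℕ) : Measurable (fun p : ℝ × ℝ => KSOEven n p.1 p.2) := by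
  unfold KSOEven
  exact ((sKer_measurable _).comp (measurable_fst.sub measurable_snd)).add
    ((sKer_measurable _).comp (measurable_fst.add measurable_snd))

lemma KSO_measurable_x (n : ℕ) (y : ℝ) : Measurable (fun x : ℝ => KSOEven n x y) := by
  have := (KSO_measurable n).comp
    ((measurable_id.prodMk (measurable_const : Measurable fun _ : ℝ => y)))
  exact this

lemma abs_KSO_le (n : ℕ) (x y : ℝ) : |KSOEven n x y| ≤ 2*((2*n-1 : ℕ):ℝ) := by
  unfold KSOEven
  calc |sKer (2*n-1) (x-y) + sKer (2*n-1) (x+y)|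
      ≤ |sKer (2*n-1) (x-y)| + |sKer (2*n-1) (x+y)| := abs_add_le _ _
    _ ≤ ((2*n-1 : ℕ):ℝ) + ((2*n-1 : ℕ):ℝ) := add_le_add (abs_sKer_le _ _) (abs_sKer_le _ _)
    _ = 2*((2*n-1 : ℕ):ℝ) := by ring

/- ### Main theorem -/

set_option maxHeartbeats 1000000 in
/-- **Variance bound for eigenvalue counts of `SO(2n)`.** There is an absolute constant
`C > 0` such that for every `n ≥ 1` and every interval `I = [a,b] ⊆ [0,1/2]`:
`∫_{[0,1/2]∖I} ∫_I K_{SO(2n)}(x,y)² dx dy ≤ C·log(2 + 2n·|I|)`. -/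
theorem SO_even_offdiagonal_kernel_integral :
    ∃ C : ℝ, 0 < C ∧ ∀ (n : ℕ), 1 ≤ n → ∀ a b : ℝ,
      0 ≤ a → a ≤ b → b ≤ 1 / 2 →
      (∫ y in Set.Icc (0 : ℝ) (1 / 2) \ Set.Icc a b, ∫ x in Set.Icc a b, (KSOEven n x y) ^ 2)
        ≤ C * Real.log (2 + 2 * (n : ℝ) * (b - a)) := by
  use 42, by norm_num
  intro n hn a b ha hab hb
  set m : ℕ := 2*n-1 with hm
  set M : ℝ := ((m:ℕ):ℝ) with hMdef
  set L : ℝ := b - a with hLdef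
  have hM : 1 ≤ M := by
    rw [hMdef]
    have : 1 ≤ m := by omega
    exact_mod_cast this
  have hM0 : 0 < M := lt_of_lt_of_le one_pos hM
  have hL : 0 ≤ L := by rw [hLdef]; linarith
  -- the inner integral bound
  set B : ℝ → ℝ := fun y =>
    2*M*(Real.arctan (2*M*(b-y)) - Real.arctan (2*M*(a-y)))
    + 2*M*(Real.arctan (2*M*(b+y)) - Real.arctan (2*M*(a+y)))
    + 2*M*(Real.arctan (2*M*((1-a)-y)) - Real.arctan (2*M*((1-b)-y))) with hBdef
  have inner_le : ∀ y : ℝ, y ∈ Set.Icc (0:ℝ) (1/2) →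
      (∫ x in Set.Icc a b, (KSOEven n x y) ^ 2) ≤ B y := by
    intro y hy
    obtain ⟨hy0, hy2⟩ := hy
    set G : ℝ → ℝ := fun x =>
      4*M^2/(1+4*M^2*(x-y)^2) + 4*M^2/(1+4*M^2*(x-(-y))^2) + 4*M^2/(1+4*M^2*(x-(1-y))^2)
      with hGdef
    have hGcont : Continuous G := ((cont_gfun M y).add (cont_gfun M (-y))).add
      (cont_gfun M (1-y))
    have hKint : IntegrableOn (fun x => (KSOEven n x y)^2) (Set.Icc a b) := by
      apply Integrable.mono' (g := fun _ => (2*M)^2)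
        (integrableOn_const measure_Icc_lt_top.ne)
        (((KSO_measurable_x n y).pow_const 2).aestronglyMeasurable)
      filter_upwards with x
      rw [Real.norm_eq_abs, abs_pow]
      have habs := abs_KSO_le n x y
      rw [← hMdef] at habs
      nlinarith [abs_nonneg (KSOEven n x y)]
    have hmono : (∫ x in Set.Icc a b, (KSOEven n x y) ^ 2) ≤ ∫ x in Set.Icc a b, G x := by
      apply setIntegral_mono_on hKint (hGcont.integrableOn_Icc) measurableSet_Icc
      intro x hx
      have := KSO_sq_ptwise n x y (by linarith [hx.1]) (by linarith [hx.2]) hy0 hy2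
      rw [← hm, ← hMdef] at this
      exact this
    have hcalc : ∫ x in Set.Icc a b, G x = B y := by
      rw [integral_Icc_eq_integral_Ioc, ← intervalIntegral.integral_of_le hab]
      rw [hGdef]
      rw [intervalIntegral.integral_add
        (f := fun x => 4*M^2/(1+4*M^2*(x-y)^2) + 4*M^2/(1+4*M^2*(x-(-y))^2))
        (g := fun x => 4*M^2/(1+4*M^2*(x-(1-y))^2)) (((cont_gfun M y).add
        (cont_gfun M (-y))).intervalIntegrable a b) ((cont_gfun M (1-y)).intervalIntegrable a b),
        intervalIntegral.integral_add ((cont_gfun M y).intervalIntegrable a b)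
        ((cont_gfun M (-y)).intervalIntegrable a b)]
      rw [integral_gfun, integral_gfun, integral_gfun]
      rw [hBdef]
      have r1 : 2*M*(b-(-y)) = 2*M*(b+y) := by ring
      have r2 : 2*M*(a-(-y)) = 2*M*(a+y) := by ring
      have r3 : Real.arctan (2*M*(b-(1-y))) = -Real.arctan (2*M*((1-b)-y)) := by
        rw [show 2*M*(b-(1-y)) = -(2*M*((1-b)-y)) by ring, Real.arctan_neg]
      have r4 : Real.arctan (2*M*(a-(1-y))) = -Real.arctan (2*M*((1-a)-y)) := by
        rw [show 2*M*(a-(1-y)) = -(2*M*((1-a)-y)) by ring, Real.arctan_neg]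
      rw [r1, r2, r3, r4]
      ring
    linarith [hmono, le_of_eq hcalc]
  -- the region
  set R : Set ℝ := Set.Icc (0:ℝ) (1/2) \ Set.Icc a b with hRdef
  have hRsub : R ⊆ Set.Icc (0:ℝ) (1/2) := Set.diff_subset
  have hRmeas : MeasurableSet R := measurableSet_Icc.diff measurableSet_Icc
  -- integrability of the inner integral as a function of y
  have hFmeas : StronglyMeasurable (fun y => ∫ x in Set.Icc a b, (KSOEven n x y) ^ 2) := by
    apply StronglyMeasurable.integral_prod_right
      (f := fun (y : ℝ) (x : ℝ) => (KSOEven n x y)^2)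
    exact (((KSO_measurable n).comp measurable_swap).pow_const 2).stronglyMeasurable
  have hFbound : ∀ y : ℝ, ‖∫ x in Set.Icc a b, (KSOEven n x y) ^ 2‖ ≤ (2*M)^2 * 1 := by
    intro y
    have h1 : ‖∫ x in Set.Icc a b, (KSOEven n x y) ^ 2‖
        ≤ (2*M)^2 * (volume (Set.Icc a b)).toReal := by
      apply norm_setIntegral_le_of_norm_le_const measure_Icc_lt_top
      · intro x _
        rw [Real.norm_eq_abs, abs_pow]
        have := abs_KSO_le n x y
        rw [← hMdef] at this
        nlinarith [abs_nonneg (KSOEven n x y)]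
    have h2 : (volume (Set.Icc a b)).toReal ≤ 1 := by
      rw [Real.volume_Icc, ENNReal.toReal_ofReal (by linarith)]
      linarith
    calc ‖∫ x in Set.Icc a b, (KSOEven n x y) ^ 2‖
        ≤ (2*M)^2 * (volume (Set.Icc a b)).toReal := h1
      _ ≤ (2*M)^2 * 1 := by
          apply mul_le_mul_of_nonneg_left h2 (by positivity)
  have hFint : IntegrableOn (fun y => ∫ x in Set.Icc a b, (KSOEven n x y) ^ 2) R := by
    apply Integrable.mono' (g := fun _ => (2*M)^2*1)
    · exact integrableOn_const (lt_of_le_of_lt (measure_mono hRsub)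
        measure_Icc_lt_top).ne
    · exact hFmeas.aestronglyMeasurable
    · filter_upwards with y using hFbound y
  -- continuity & integrability of B
  have hBcont : Continuous B := by
    rw [hBdef]
    apply Continuous.add
    apply Continuous.add
    · exact continuous_const.mul ((Real.continuous_arctan.comp (by fun_prop)).sub
        (Real.continuous_arctan.comp (by fun_prop)))
    · exact continuous_const.mul ((Real.continuous_arctan.comp (by fun_prop)).sub
        (Real.continuous_arctan.comp (by fun_prop)))
    · exact continuous_const.mul ((Real.continuous_arctan.comp (by fun_prop)).sub
        (Real.continuous_arctan.comp (by fun_prop)))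
  have hBintIcc : IntegrableOn B (Set.Icc (0:ℝ) (1/2)) := hBcont.integrableOn_Icc
  have hBintR : IntegrableOn B R := hBintIcc.mono_set hRsub
  -- outer monotonicity
  have houter : (∫ y in R, ∫ x in Set.Icc a b, (KSOEven n x y) ^ 2) ≤ ∫ y in R, B y :=
    setIntegral_mono_on hFint hBintR hRmeas (fun y hy => inner_le y (hRsub hy))
  -- split the region
  have hRsplit : R = Set.Ico (0:ℝ) a ∪ Set.Ioc b (1/2) := by
    rw [hRdef]
    ext y
    simp only [Set.mem_diff, Set.mem_Icc, Set.mem_union, Set.mem_Ico, Set.mem_Ioc, not_and,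
      not_le]
    constructor
    · rintro ⟨⟨h0, h2⟩, h3⟩
      rcases lt_or_ge y a with hya | hya
      · exact Or.inl ⟨h0, hya⟩
      · exact Or.inr ⟨h3 hya, h2⟩
    · rintro (⟨h0, h1⟩ | ⟨h1, h2⟩)
      · exact ⟨⟨h0, by linarith⟩, fun hay => absurd hay (not_le.mpr h1)⟩
      · exact ⟨⟨by linarith, h2⟩, fun _ => h1⟩
  have hdisj : Disjoint (Set.Ico (0:ℝ) a) (Set.Ioc b (1/2)) := by
    apply Set.disjoint_left.mpr
    rintro y ⟨_, h1⟩ ⟨h2, _⟩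
    linarith
  have hsplit : ∫ y in R, B y = (∫ y in Set.Ico (0:ℝ) a, B y) + ∫ y in Set.Ioc b (1/2), B y := by
    rw [hRsplit]
    exact setIntegral_union hdisj measurableSet_Ioc
      (hBcont.integrableOn_Icc.mono_set Set.Ico_subset_Icc_self)
      ((hBcont.integrableOn_Icc).mono_set Set.Ioc_subset_Icc_self)
  -- convert to interval integrals
  have hIoo1 : ∫ y in Set.Ico (0:ℝ) a, B y = ∫ y in (0:ℝ)..a, B y := by
    rw [integral_Ico_eq_integral_Ioo, ← integral_Ioc_eq_integral_Ioo,
      ← intervalIntegral.integral_of_le ha]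
  have hIoo2 : ∫ y in Set.Ioc b (1/2), B y = ∫ y in b..(1/2:ℝ), B y := by
    rw [← intervalIntegral.integral_of_le hb]
  -- brackets
  set f1 : ℝ → ℝ := fun y => Real.arctan (2*M*(b-y)) - Real.arctan (2*M*(a-y)) with hf1
  set f2 : ℝ → ℝ := fun y => Real.arctan (2*M*(b+y)) - Real.arctan (2*M*(a+y)) with hf2
  set f3 : ℝ → ℝ := fun y => Real.arctan (2*M*((1-a)-y)) - Real.arctan (2*M*((1-b)-y)) with hf3
  have hf1c : Continuous f1 := (Real.continuous_arctan.comp (by fun_prop)).sub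
    (Real.continuous_arctan.comp (by fun_prop))
  have hf2c : Continuous f2 := (Real.continuous_arctan.comp (by fun_prop)).sub
    (Real.continuous_arctan.comp (by fun_prop))
  have hf3c : Continuous f3 := (Real.continuous_arctan.comp (by fun_prop)).sub
    (Real.continuous_arctan.comp (by fun_prop))
  have hBsum : ∀ p q : ℝ, ∫ y in p..q, B y
      = 2*M*(∫ y in p..q, f1 y) + 2*M*(∫ y in p..q, f2 y) + 2*M*(∫ y in p..q, f3 y) := by
    intro p q
    have : ∀ y, B y = 2*M*f1 y + 2*M*f2 y + 2*M*f3 y := by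
      intro y; rw [hBdef, hf1, hf2, hf3]
    rw [intervalIntegral.integral_congr (g := fun y => 2*M*f1 y + 2*M*f2 y + 2*M*f3 y)
      (fun y _ => this y)]
    rw [intervalIntegral.integral_add (f := fun x => 2*M*f1 x + 2*M*f2 x)
      (g := fun x => 2*M*f3 x) (((continuous_const.mul hf1c).add
      (continuous_const.mul hf2c)).intervalIntegrable p q)
      ((continuous_const.mul hf3c).intervalIntegrable p q),
      intervalIntegral.integral_add (f := fun x => 2*M*f1 x) (g := fun x => 2*M*f2 x)
      ((continuous_const.mul hf1c).intervalIntegrable p q)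
      ((continuous_const.mul hf2c).intervalIntegrable p q),
      intervalIntegral.integral_const_mul, intervalIntegral.integral_const_mul,
      intervalIntegral.integral_const_mul]
  have hlogn : 0 ≤ Real.log (1+2*M*L) := Real.log_nonneg (by nlinarith)
  have hbound : (1:ℝ)/M * (1 + Real.log (1+2*M*L)) ≥ 0 :=
    mul_nonneg (le_of_lt (div_pos one_pos hM0)) (by linarith)
  set E : ℝ := (1/M) * (1 + Real.log (1+2*M*L)) with hEdef
  have hcb : b = a + L := by rw [hLdef]; ring
  have hc3 : (1-a) = (1-b) + L := by rw [hLdef]; ring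
  -- six bracket bounds
  have t11 : ∫ y in (0:ℝ)..a, f1 y ≤ E := bracketB_sub M L a b 0 a hM hL hcb ha le_rfl
  have t12 : ∫ y in (0:ℝ)..a, f2 y ≤ E := bracketB_add M L a b 0 a hM hL hcb ha (by linarith)
  have t13 : ∫ y in (0:ℝ)..a, f3 y ≤ E :=
    bracketB_sub M L (1-b) (1-a) 0 a hM hL hc3 ha (by linarith)
  have t21 : ∫ y in b..(1/2:ℝ), f1 y ≤ E := bracketB_sub' M L a b b (1/2) hM hL hcb hb le_rfl
  have t22 : ∫ y in b..(1/2:ℝ), f2 y ≤ E :=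
    bracketB_add M L a b b (1/2) hM hL hcb hb (by linarith)
  have t23 : ∫ y in b..(1/2:ℝ), f3 y ≤ E :=
    bracketB_sub M L (1-b) (1-a) b (1/2) hM hL hc3 hb (by linarith)
  -- combine
  have hB1 : ∫ y in (0:ℝ)..a, B y ≤ 2*M*E + 2*M*E + 2*M*E := by
    rw [hBsum 0 a]
    have m1 := mul_le_mul_of_nonneg_left t11 (by positivity : (0:ℝ) ≤ 2*M)
    have m2 := mul_le_mul_of_nonneg_left t12 (by positivity : (0:ℝ) ≤ 2*M)
    have m3 := mul_le_mul_of_nonneg_left t13 (by positivity : (0:ℝ) ≤ 2*M)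
    linarith
  have hB2 : ∫ y in b..(1/2:ℝ), B y ≤ 2*M*E + 2*M*E + 2*M*E := by
    rw [hBsum b (1/2)]
    have m1 := mul_le_mul_of_nonneg_left t21 (by positivity : (0:ℝ) ≤ 2*M)
    have m2 := mul_le_mul_of_nonneg_left t22 (by positivity : (0:ℝ) ≤ 2*M)
    have m3 := mul_le_mul_of_nonneg_left t23 (by positivity : (0:ℝ) ≤ 2*M)
    linarith
  have htot : (∫ y in R, ∫ x in Set.Icc a b, (KSOEven n x y) ^ 2)
      ≤ 12 * (1 + Real.log (1+2*M*L)) := by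
    have hME : 2*M*E = 2*(1 + Real.log (1+2*M*L)) := by
      rw [hEdef]; field_simp
    calc (∫ y in R, ∫ x in Set.Icc a b, (KSOEven n x y) ^ 2)
        ≤ ∫ y in R, B y := houter
      _ = (∫ y in Set.Ico (0:ℝ) a, B y) + ∫ y in Set.Ioc b (1/2), B y := hsplit
      _ = (∫ y in (0:ℝ)..a, B y) + ∫ y in b..(1/2:ℝ), B y := by rw [hIoo1, hIoo2]
      _ ≤ (2*M*E + 2*M*E + 2*M*E) + (2*M*E + 2*M*E + 2*M*E) := add_le_add hB1 hB2
      _ = 6 * (2*M*E) := by ring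
      _ = 12 * (1 + Real.log (1+2*M*L)) := by rw [hME]; ring
  -- final arithmetic
  have hn0 : (0:ℝ) ≤ (n:ℝ) := Nat.cast_nonneg n
  have hnL : (0:ℝ) ≤ (n:ℝ) * L := mul_nonneg hn0 hL
  have hM2n : M ≤ 2*(n:ℝ) := by
    rw [hMdef]
    have h1 : m ≤ 2*n := by omega
    calc ((m:ℕ):ℝ) ≤ ((2*n : ℕ):ℝ) := by exact_mod_cast h1
      _ = 2*(n:ℝ) := by push_cast; ring
  have hML0 : (0:ℝ) < 1 + 2*M*L := by nlinarith
  have hlog1 : Real.log (1+2*M*L) ≤ 2 * Real.log (2 + 2*(n:ℝ)*L) := by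
    have h2L : (0:ℝ) ≤ 2*L := by linarith
    have hint1 := mul_le_mul_of_nonneg_left hM2n h2L
    have h2 : 1 + 2*M*L ≤ (2 + 2*(n:ℝ)*L)^2 := by
      nlinarith [hint1, sq_nonneg ((n:ℝ)*L)]
    calc Real.log (1+2*M*L) ≤ Real.log ((2 + 2*(n:ℝ)*L)^2) := Real.log_le_log hML0 h2
      _ = 2 * Real.log (2 + 2*(n:ℝ)*L) := by
          rw [Real.log_pow]; push_cast; ring
  have hlog2 : (2:ℝ)/3 ≤ Real.log (2 + 2*(n:ℝ)*L) := by
    have h1 : Real.log 2 ≤ Real.log (2 + 2*(n:ℝ)*L) :=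
      Real.log_le_log (by norm_num) (by nlinarith)
    have h2 : (2:ℝ)/3 ≤ Real.log 2 := by
      have := Real.log_two_gt_d9
      linarith
    linarith
  calc (∫ y in R, ∫ x in Set.Icc a b, (KSOEven n x y) ^ 2)
      ≤ 12 * (1 + Real.log (1+2*M*L)) := htot
    _ ≤ 12 + 24 * Real.log (2 + 2*(n:ℝ)*L) := by linarith
    _ ≤ 42 * Real.log (2 + 2*(n:ℝ)*(b-a)) := by
        rw [← hLdef]
        linarith
end
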